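/- For A = [[1,0],[0,0]] and B = [[0,1],[0,0]], the graph G^2(A,B) is word-representable but the graph G^3(A,B) is not word-representable (so the index of word-representability of this pair is 3). -/

import Mathlib

/-- A word `w` over alphabet `V` represents the graph `G`: every vertex occurs in `w`,
and two distinct vertices are adjacent iff their letters alternate in `w`. -/
def WordRepresents {V : Type*} [DecidableEq V] (w : List V) (G : SimpleGraph V) : Prop :=
  (∀ v : V, v ∈ w) ∧
  ∀ x y : V, x ≠ y →
    (G.Adj x y ↔ (w.filter (fun z => z == x || z == y)).Chain' (· ≠ ·))

/-- A graph is word-representable if some word represents it. -/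
def WordRepresentable {V : Type*} [DecidableEq V] (G : SimpleGraph V) : Prop :=
  ∃ w : List V, WordRepresents w G

/-- The split graph `G(M)` of an `m × n` binary matrix `M`: vertices `Sum.inl j`
(`j : Fin n`) form a clique, vertices `Sum.inr i` (`i : Fin m`) form an independent set,
and `Sum.inr i` is adjacent to `Sum.inl j` iff `M i j = true`. -/
def splitGraph {m n : ℕ} (M : Fin m → Fin n → Bool) : SimpleGraph (Fin n ⊕ Fin m) :=
  SimpleGraph.fromRel (fun x y =>
    match x, y with
    | Sum.inl _, Sum.inl _ => True
    | Sum.inl j, Sum.inr i => M i j = true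
    | _, _ => False)

/-- `morphIter A B k` is the matrix `M^k(A,B)`, obtained from the `1 × 1` matrix `[0]`
by `k` iterations of the 2-dimensional morphism replacing `0` by the block `A`
and `1` by the block `B`. -/
def morphIter {m n : ℕ} (A B : Fin m → Fin n → Bool) :
    (k : ℕ) → Fin (m ^ k) → Fin (n ^ k) → Bool
  | 0, _, _ => false
  | k + 1, i, j =>
    have hm : 0 < m := Nat.pos_of_ne_zero (fun h => by
      have := i.isLt; simp [h] at this)
    have hn : 0 < n := Nat.pos_of_ne_zero (fun h => by
      have := j.isLt; simp [h] at this)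
    have hR : i.val / m < m ^ k :=
      (Nat.div_lt_iff_lt_mul hm).2 (by rw [← pow_succ]; exact i.isLt)
    have hC : j.val / n < n ^ k :=
      (Nat.div_lt_iff_lt_mul hn).2 (by rw [← pow_succ]; exact j.isLt)
    if morphIter A B k ⟨i.val / m, hR⟩ ⟨j.val / n, hC⟩ then
      B ⟨i.val % m, Nat.mod_lt _ hm⟩ ⟨j.val % n, Nat.mod_lt _ hn⟩
    else
      A ⟨i.val % m, Nat.mod_lt _ hm⟩ ⟨j.val % n, Nat.mod_lt _ hn⟩

/-- `Gk A B k` is the split graph `G^k(A,B) = G(M^k(A,B))`. -/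
def Gk {m n : ℕ} (A B : Fin m → Fin n → Bool) (k : ℕ) :
    SimpleGraph (Fin (n ^ k) ⊕ Fin (m ^ k)) :=
  splitGraph (morphIter A B k)


/-- number of occurrences of `x` in `l` -/
def cnt {V : Type*} [DecidableEq V] (x : V) (l : List V) : ℕ :=
  l.countP (fun z => decide (z = x))

lemma cnt_nil {V : Type*} [DecidableEq V] (x : V) : cnt x ([] : List V) = 0 := rfl

lemma cnt_cons_self {V : Type*} [DecidableEq V] (x : V) (l : List V) :
    cnt x (x :: l) = cnt x l + 1 := by simp [cnt, List.countP_cons]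

lemma cnt_cons_ne {V : Type*} [DecidableEq V] {a x : V} (h : a ≠ x) (l : List V) :
    cnt x (a :: l) = cnt x l := by simp [cnt, List.countP_cons, h]

/-- `x` "leads" `y` in `w`: in every prefix, `#y ≤ #x ≤ #y + 1`. -/
def RelW {V : Type*} [DecidableEq V] (w : List V) (x y : V) : Prop :=
  ∀ p : ℕ, cnt y (w.take p) ≤ cnt x (w.take p) ∧ cnt x (w.take p) ≤ cnt y (w.take p) + 1

lemma altAux {V : Type*} [DecidableEq V] (f : V → Bool) (l : List V) :
    ∀ (x y : V), x ≠ y → f x = true → f y = true →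
    (∀ z, f z = true → z = x ∨ z = y) →
    (((l.filter f).Chain' (· ≠ ·) ∧ ∀ h ∈ (l.filter f).head?, h = x) ↔ RelW l x y) := by
  induction l with
  | nil =>
    intro x y hxy _ _ _
    simp [RelW, cnt, List.Chain']
  | cons a t ih =>
    intro x y hxy hfx hfy hfz
    by_cases ha : f a = true
    · rcases hfz a ha with rfl | rfl
      · -- head element is x (named a)
        rw [List.filter_cons_of_pos ha]
        have key : ((a :: t.filter f).Chain' (· ≠ ·) ∧ ∀ h ∈ (a :: t.filter f).head?, h = a) ↔
            ((t.filter f).Chain' (· ≠ ·) ∧ ∀ h ∈ (t.filter f).head?, h = y) := by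
          rw [List.Chain', List.isChain_cons]
          constructor
          · rintro ⟨⟨hhd, hch⟩, -⟩
            refine ⟨hch, fun h hmem => ?_⟩
            have hmemL : h ∈ t.filter f := List.mem_of_mem_head? hmem
            rcases hfz h (List.of_mem_filter hmemL) with rfl | rfl
            · exact absurd rfl (hhd h hmem)
            · rfl
          · rintro ⟨hch, hhd⟩
            refine ⟨⟨fun h hmem => ?_, hch⟩, by simp⟩
            rw [hhd h hmem]; exact hxy
        rw [key, ih y a (Ne.symm hxy) hfy hfx (fun z hz => (hfz z hz).symm)]
        constructor
        · intro h p
          match p with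
          | 0 => simp [cnt]
          | Nat.succ q =>
            rw [List.take_succ_cons, cnt_cons_self, cnt_cons_ne hxy]
            have := h q
            omega
        · intro h p
          have := h (p + 1)
          rw [List.take_succ_cons, cnt_cons_self, cnt_cons_ne hxy] at this
          omega
      · -- head element is y (named a)
        rw [List.filter_cons_of_pos ha]
        constructor
        · rintro ⟨-, hhd⟩
          exact absurd (hhd a (by simp)).symm hxy
        · intro h
          have := h 1
          rw [List.take_succ_cons, List.take_zero, cnt_cons_self,
            cnt_cons_ne (Ne.symm hxy), cnt_nil, cnt_nil] at this
          omega
    · have hax : a ≠ x := fun h => ha (h ▸ hfx)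
      have hay : a ≠ y := fun h => ha (h ▸ hfy)
      rw [List.filter_cons_of_neg (by simp [ha])]
      rw [ih x y hxy hfx hfy hfz]
      constructor
      · intro h p
        match p with
        | 0 => simp [cnt]
        | Nat.succ q =>
          rw [List.take_succ_cons, cnt_cons_ne hax, cnt_cons_ne hay]
          exact h q
      · intro h p
        have := h (p + 1)
        rwa [List.take_succ_cons, cnt_cons_ne hax, cnt_cons_ne hay] at this

lemma altIff {V : Type*} [DecidableEq V] (hbeq : ∀ a b : V, (a == b) = true ↔ a = b)
    (w : List V) (x y : V) (hxy : x ≠ y) :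
    (w.filter (fun z => z == x || z == y)).Chain' (· ≠ ·) ↔ (RelW w x y ∨ RelW w y x) := by
  set f : V → Bool := fun z => z == x || z == y with hf
  have hfx : f x = true := by
    show (x == x || x == y) = true
    rw [Bool.or_eq_true]; exact Or.inl ((hbeq x x).mpr rfl)
  have hfy : f y = true := by
    show (y == x || y == y) = true
    rw [Bool.or_eq_true]; exact Or.inr ((hbeq y y).mpr rfl)
  have hfc : ∀ z, f z = true → z = x ∨ z = y := by
    intro z hz
    rcases Bool.or_eq_true _ _ |>.mp hz with h | h
    · exact Or.inl ((hbeq _ _).mp h)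
    · exact Or.inr ((hbeq _ _).mp h)
  rcases hh : (w.filter f).head? with _ | h
  · have hemp : w.filter f = [] := List.head?_eq_none_iff.mp hh
    have hzero : ∀ (z : V), f z = true → ∀ p, cnt z (w.take p) = 0 := by
      intro z hz p
      refine List.countP_eq_zero.mpr ?_
      intro b hb
      simp only [decide_eq_true_eq]
      rintro rfl
      have : b ∈ w.filter f := List.mem_filter.mpr ⟨List.take_subset p w hb, hz⟩
      rw [hemp] at this
      exact absurd this (List.not_mem_nil)
    constructor
    · intro _
      left
      intro p
      rw [hzero x hfx p, hzero y hfy p]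
      omega
    · intro _
      rw [hemp]
      exact List.isChain_nil
  · have hmemh : h ∈ w.filter f := List.mem_of_mem_head? (by rw [hh]; rfl)
    rcases hfc h (List.of_mem_filter hmemh) with rfl | rfl
    · have H := altAux f w h y hxy hfx hfy hfc
      have headcond : ∀ h' ∈ (w.filter f).head?, h' = h := by
        intro h' hmem
        rw [hh] at hmem
        exact (Option.mem_some_iff.mp hmem).symm
      constructor
      · intro hch
        exact Or.inl (H.mp ⟨hch, headcond⟩)
      · rintro (hr | hr)
        · exact (H.mpr hr).1
        · exfalso
          have H' := altAux f w y h (Ne.symm hxy) hfy hfx (fun z hz => (hfc z hz).symm)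
          have := (H'.mpr hr).2 h (by rw [hh]; rfl)
          exact hxy this
    · have H := altAux f w h x (Ne.symm hxy) hfy hfx (fun z hz => (hfc z hz).symm)
      have headcond : ∀ h' ∈ (w.filter f).head?, h' = h := by
        intro h' hmem
        rw [hh] at hmem
        exact (Option.mem_some_iff.mp hmem).symm
      constructor
      · intro hch
        exact Or.inr (H.mp ⟨hch, headcond⟩)
      · rintro (hr | hr)
        · exfalso
          have H' := altAux f w x h hxy hfx hfy hfc
          have := (H'.mpr hr).2 h (by rw [hh]; rfl)
          exact hxy this.symm
        · exact (H.mpr hr).1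

lemma eqContra {V : Type*} [DecidableEq V] (w : List V) (x y : V) (hx : x ∈ w) (hxy : x ≠ y)
    (h : ∀ p, cnt x (w.take p) = cnt y (w.take p)) : False := by
  obtain ⟨i, hi, hgi⟩ := List.mem_iff_getElem.mp hx
  have h1 := h i
  have h2 := h (i + 1)
  rw [List.take_succ, List.getElem?_eq_getElem hi, hgi] at h2
  simp only [Option.toList_some, cnt, List.countP_append] at h2
  have e1 : List.countP (fun z => decide (z = x)) [x] = 1 := by simp
  have e2 : List.countP (fun z => decide (z = y)) [x] = 0 := by simp [hxy]
  rw [e1, e2] at h2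
  simp only [cnt] at h1
  omega

def brel {m n : ℕ} (M : Fin m → Fin n → Bool) : (Fin n ⊕ Fin m) → (Fin n ⊕ Fin m) → Bool
  | Sum.inl _, Sum.inl _ => true
  | Sum.inl j, Sum.inr i => M i j
  | _, _ => false

lemma splitGraph_adj' {m n : ℕ} (M : Fin m → Fin n → Bool) (u v : Fin n ⊕ Fin m) :
    (splitGraph M).Adj u v ↔ u ≠ v ∧ (brel M u v || brel M v u) = true := by
  unfold splitGraph
  rw [SimpleGraph.fromRel_adj]
  rcases u with j | i <;> rcases v with j' | i' <;> simp [brel]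

instance splitGraphAdjDec {m n : ℕ} (M : Fin m → Fin n → Bool) :
    DecidableRel (splitGraph M).Adj :=
  fun u v => decidable_of_iff _ (splitGraph_adj' M u v).symm

instance GkAdjDec {m n : ℕ} (A B : Fin m → Fin n → Bool) (k : ℕ) :
    DecidableRel (Gk A B k).Adj :=
  fun u v => decidable_of_iff _ (splitGraph_adj' (morphIter A B k) u v).symm

instance (priority := 2000) chainDec {α : Type*} {R : α → α → Prop} [dr : DecidableRel R] :
    ∀ (a : α) (l : List α), Decidable (List.Chain R a l)
  | _, [] => isTrue List.Chain.nil
  | a, b :: l =>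
    @decidable_of_iff _ _ List.chain_cons.symm (@instDecidableAnd _ _ (dr a b) (chainDec b l))

instance (priority := 2000) chain'Dec {α : Type*} {R : α → α → Prop} [DecidableRel R] :
    ∀ l : List α, Decidable (l.Chain' R)
  | [] => isTrue List.isChain_nil
  | (x :: l) => inferInstanceAs (Decidable (List.Chain R x l))

def ConvP (lt : Fin 8 → Fin 8 → Prop) (T : Fin 8 → Prop) : Prop :=
  ∀ u v z, lt u v → lt v z → T u → T z → T v

lemma pairConsec (lt : Fin 8 → Fin 8 → Prop)
    (asym : ∀ i j, lt i j → lt j i → False)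
    {T U : Fin 8 → Prop} (cT : ConvP lt T) (cU : ConvP lt U) {p q : Fin 8}
    (hpT : T p) (hpU : U p) (hqT : T q) (hqU : U q)
    (hint : ∀ j, T j → U j → j = p ∨ j = q) :
    ∀ v, ¬(lt p v ∧ lt v q) ∧ ¬(lt q v ∧ lt v p) := by
  intro v
  constructor
  · rintro ⟨h1, h2⟩
    rcases hint v (cT p v q h1 h2 hpT hqT) (cU p v q h1 h2 hpU hqU) with rfl | rfl
    · exact asym _ _ h1 h1
    · exact asym _ _ h2 h2
  · rintro ⟨h1, h2⟩
    rcases hint v (cT q v p h1 h2 hqT hpT) (cU q v p h1 h2 hqU hpU) with rfl | rfl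
    · exact asym _ _ h2 h2
    · exact asym _ _ h1 h1

lemma pairBelow (lt : Fin 8 → Fin 8 → Prop)
    (total : ∀ i j : Fin 8, i ≠ j → lt i j ∨ lt j i)
    {m a b : Fin 8} (hab : a ≠ b) (ha : lt a m) (hb : lt b m)
    (ba : ∀ v, ¬(lt a v ∧ lt v m)) (bb : ∀ v, ¬(lt b v ∧ lt v m)) : False := by
  rcases total a b hab with h | h
  · exact ba b ⟨h, hb⟩
  · exact bb a ⟨h, ha⟩

lemma pairAbove (lt : Fin 8 → Fin 8 → Prop)
    (total : ∀ i j : Fin 8, i ≠ j → lt i j ∨ lt j i)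
    {m a b : Fin 8} (hab : a ≠ b) (ha : lt m a) (hb : lt m b)
    (ba : ∀ v, ¬(lt m v ∧ lt v a)) (bb : ∀ v, ¬(lt m v ∧ lt v b)) : False := by
  rcases total a b hab with h | h
  · exact bb a ⟨ha, h⟩
  · exact ba b ⟨hb, h⟩

lemma noThree (lt : Fin 8 → Fin 8 → Prop)
    (total : ∀ i j : Fin 8, i ≠ j → lt i j ∨ lt j i)
    {m x y z : Fin 8} (hxm : x ≠ m) (hym : y ≠ m) (hzm : z ≠ m)
    (hxy : x ≠ y) (hxz : x ≠ z) (hyz : y ≠ z)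
    (bx : ∀ v, ¬(lt m v ∧ lt v x) ∧ ¬(lt x v ∧ lt v m))
    (by' : ∀ v, ¬(lt m v ∧ lt v y) ∧ ¬(lt y v ∧ lt v m))
    (bz : ∀ v, ¬(lt m v ∧ lt v z) ∧ ¬(lt z v ∧ lt v m)) : False := by
  rcases total x m hxm with h1 | h1 <;> rcases total y m hym with h2 | h2 <;>
    rcases total z m hzm with h3 | h3
  · exact pairBelow lt total hxy h1 h2 (fun v => (bx v).2) (fun v => (by' v).2)
  · exact pairBelow lt total hxy h1 h2 (fun v => (bx v).2) (fun v => (by' v).2)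
  · exact pairBelow lt total hxz h1 h3 (fun v => (bx v).2) (fun v => (bz v).2)
  · exact pairAbove lt total hyz h2 h3 (fun v => (by' v).1) (fun v => (bz v).1)
  · exact pairBelow lt total hyz h2 h3 (fun v => (by' v).2) (fun v => (bz v).2)
  · exact pairAbove lt total hxz h1 h3 (fun v => (bx v).1) (fun v => (bz v).1)
  · exact pairAbove lt total hxy h1 h2 (fun v => (bx v).1) (fun v => (by' v).1)
  · exact pairAbove lt total hxy h1 h2 (fun v => (bx v).1) (fun v => (by' v).1)

def bM3 : Fin 8 → Fin 8 → Bool :=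
  ![![true,false,false,true,false,true,true,false],
    ![false,false,false,false,false,false,false,false],
    ![true,false,true,false,true,false,true,false],
    ![false,false,false,false,false,false,false,false],
    ![false,true,true,false,false,true,true,false],
    ![false,false,false,false,false,false,false,false],
    ![true,false,true,false,true,false,true,false],
    ![false,false,false,false,false,false,false,false]]

lemma final8 (lt : Fin 8 → Fin 8 → Prop)
    (total : ∀ i j : Fin 8, i ≠ j → lt i j ∨ lt j i)
    (asym : ∀ i j, lt i j → lt j i → False)
    (h0 : ConvP lt (fun j => bM3 0 j = true) ∨ ConvP lt (fun j => ¬ bM3 0 j = true))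
    (h2 : ConvP lt (fun j => bM3 2 j = true) ∨ ConvP lt (fun j => ¬ bM3 2 j = true))
    (h4 : ConvP lt (fun j => bM3 4 j = true) ∨ ConvP lt (fun j => ¬ bM3 4 j = true)) :
    False := by
  rcases h0 with c0 | c0 <;> rcases h2 with c2 | c2 <;> rcases h4 with c4 | c4
  · -- S0 S2 S4 : m=6, x=0 (pair 0,6), y=5 (pair 5,6), z=2 (pair 2,6)
    have b1 := pairConsec lt asym c0 c2 (p := 0) (q := 6)
      (by decide) (by decide) (by decide) (by decide) (by decide)
    have b2 := pairConsec lt asym c0 c4 (p := 5) (q := 6)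
      (by decide) (by decide) (by decide) (by decide) (by decide)
    have b3 := pairConsec lt asym c2 c4 (p := 2) (q := 6)
      (by decide) (by decide) (by decide) (by decide) (by decide)
    exact noThree lt total (m := 6) (x := 0) (y := 5) (z := 2)
      (by decide) (by decide) (by decide) (by decide) (by decide) (by decide)
      (fun v => ⟨(b1 v).2, (b1 v).1⟩) (fun v => ⟨(b2 v).2, (b2 v).1⟩)
      (fun v => ⟨(b3 v).2, (b3 v).1⟩)
  · -- S0 S2 S4c : m=0, x=6 (0,6), y=3 (0,3), z=4 (0,4)
    have b1 := pairConsec lt asym c0 c2 (p := 0) (q := 6)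
      (by decide) (by decide) (by decide) (by decide) (by decide)
    have b2 := pairConsec lt asym c0 c4 (p := 0) (q := 3)
      (by decide) (by decide) (by decide) (by decide) (by decide)
    have b3 := pairConsec lt asym c2 c4 (p := 0) (q := 4)
      (by decide) (by decide) (by decide) (by decide) (by decide)
    exact noThree lt total (m := 0) (x := 6) (y := 3) (z := 4)
      (by decide) (by decide) (by decide) (by decide) (by decide) (by decide)
      (fun v => b1 v) (fun v => b2 v) (fun v => b3 v)
  · -- S0 S2c S4 : m=5, x=3 (3,5), y=6 (5,6), z=1 (1,5)
    have b1 := pairConsec lt asym c0 c2 (p := 3) (q := 5)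
      (by decide) (by decide) (by decide) (by decide) (by decide)
    have b2 := pairConsec lt asym c0 c4 (p := 5) (q := 6)
      (by decide) (by decide) (by decide) (by decide) (by decide)
    have b3 := pairConsec lt asym c2 c4 (p := 1) (q := 5)
      (by decide) (by decide) (by decide) (by decide) (by decide)
    exact noThree lt total (m := 5) (x := 3) (y := 6) (z := 1)
      (by decide) (by decide) (by decide) (by decide) (by decide) (by decide)
      (fun v => ⟨(b1 v).2, (b1 v).1⟩) (fun v => b2 v)
      (fun v => ⟨(b3 v).2, (b3 v).1⟩)
  · -- S0 S2c S4c : m=3, x=5 (3,5), y=0 (0,3), z=7 (3,7)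
    have b1 := pairConsec lt asym c0 c2 (p := 3) (q := 5)
      (by decide) (by decide) (by decide) (by decide) (by decide)
    have b2 := pairConsec lt asym c0 c4 (p := 0) (q := 3)
      (by decide) (by decide) (by decide) (by decide) (by decide)
    have b3 := pairConsec lt asym c2 c4 (p := 3) (q := 7)
      (by decide) (by decide) (by decide) (by decide) (by decide)
    exact noThree lt total (m := 3) (x := 5) (y := 0) (z := 7)
      (by decide) (by decide) (by decide) (by decide) (by decide) (by decide)
      (fun v => b1 v) (fun v => ⟨(b2 v).2, (b2 v).1⟩) (fun v => b3 v)
  · -- S0c S2 S4 : m=2, x=4 (2,4), y=1 (1,2), z=6 (2,6)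
    have b1 := pairConsec lt asym c0 c2 (p := 2) (q := 4)
      (by decide) (by decide) (by decide) (by decide) (by decide)
    have b2 := pairConsec lt asym c0 c4 (p := 1) (q := 2)
      (by decide) (by decide) (by decide) (by decide) (by decide)
    have b3 := pairConsec lt asym c2 c4 (p := 2) (q := 6)
      (by decide) (by decide) (by decide) (by decide) (by decide)
    exact noThree lt total (m := 2) (x := 4) (y := 1) (z := 6)
      (by decide) (by decide) (by decide) (by decide) (by decide) (by decide)
      (fun v => b1 v) (fun v => ⟨(b2 v).2, (b2 v).1⟩) (fun v => b3 v)
  · -- S0c S2 S4c : m=4, x=2 (2,4), y=7 (4,7), z=0 (0,4)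
    have b1 := pairConsec lt asym c0 c2 (p := 2) (q := 4)
      (by decide) (by decide) (by decide) (by decide) (by decide)
    have b2 := pairConsec lt asym c0 c4 (p := 4) (q := 7)
      (by decide) (by decide) (by decide) (by decide) (by decide)
    have b3 := pairConsec lt asym c2 c4 (p := 0) (q := 4)
      (by decide) (by decide) (by decide) (by decide) (by decide)
    exact noThree lt total (m := 4) (x := 2) (y := 7) (z := 0)
      (by decide) (by decide) (by decide) (by decide) (by decide) (by decide)
      (fun v => ⟨(b1 v).2, (b1 v).1⟩) (fun v => b2 v)
      (fun v => ⟨(b3 v).2, (b3 v).1⟩)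
  · -- S0c S2c S4 : m=1, x=7 (1,7), y=2 (1,2), z=5 (1,5)
    have b1 := pairConsec lt asym c0 c2 (p := 1) (q := 7)
      (by decide) (by decide) (by decide) (by decide) (by decide)
    have b2 := pairConsec lt asym c0 c4 (p := 1) (q := 2)
      (by decide) (by decide) (by decide) (by decide) (by decide)
    have b3 := pairConsec lt asym c2 c4 (p := 1) (q := 5)
      (by decide) (by decide) (by decide) (by decide) (by decide)
    exact noThree lt total (m := 1) (x := 7) (y := 2) (z := 5)
      (by decide) (by decide) (by decide) (by decide) (by decide) (by decide)
      (fun v => b1 v) (fun v => b2 v) (fun v => b3 v)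
  · -- S0c S2c S4c : m=7, x=1 (1,7), y=4 (4,7), z=3 (3,7)
    have b1 := pairConsec lt asym c0 c2 (p := 1) (q := 7)
      (by decide) (by decide) (by decide) (by decide) (by decide)
    have b2 := pairConsec lt asym c0 c4 (p := 4) (q := 7)
      (by decide) (by decide) (by decide) (by decide) (by decide)
    have b3 := pairConsec lt asym c2 c4 (p := 3) (q := 7)
      (by decide) (by decide) (by decide) (by decide) (by decide)
    exact noThree lt total (m := 7) (x := 1) (y := 4) (z := 3)
      (by decide) (by decide) (by decide) (by decide) (by decide) (by decide)
      (fun v => ⟨(b1 v).2, (b1 v).1⟩) (fun v => ⟨(b2 v).2, (b2 v).1⟩)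
      (fun v => ⟨(b3 v).2, (b3 v).1⟩)

theorem stmt12 :
    WordRepresentable
      (Gk ![![true, false], ![false, false]] ![![false, true], ![false, false]] 2) ∧
    ¬ WordRepresentable
      (Gk ![![true, false], ![false, false]] ![![false, true], ![false, false]] 3) := by
  constructor
  · -- G^2 is word-representable
    refine ⟨[Sum.inl 0, Sum.inl 2, Sum.inr 2, Sum.inl 1, Sum.inl 3, Sum.inl 0, Sum.inr 0,
      Sum.inl 2, Sum.inl 1, Sum.inr 0, Sum.inl 3, Sum.inr 2, Sum.inr 1, Sum.inr 1,
      Sum.inr 3, Sum.inr 3], ?_, ?_⟩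
    · intro v
      rcases v with a | a <;> fin_cases a <;> simp
    · intro x y hxy
      rcases x with a | a <;> rcases y with b | b <;> fin_cases a <;> fin_cases b <;>
        first
          | exact absurd rfl hxy
          | decide
  · -- G^3 is not word-representable
    rintro ⟨w, hmem, hadj⟩
    have hM : ∀ i j : Fin 8,
        morphIter ![![true, false], ![false, false]] ![![false, true], ![false, false]] 3 i j =
          bM3 i j := by decide
    have adjChar : ∀ u v : Fin (2 ^ 3) ⊕ Fin (2 ^ 3),
        (Gk ![![true, false], ![false, false]] ![![false, true], ![false, false]] 3).Adj u v ↔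
          u ≠ v ∧
            (brel (morphIter ![![true, false], ![false, false]]
                ![![false, true], ![false, false]] 3) u v ||
              brel (morphIter ![![true, false], ![false, false]]
                ![![false, true], ![false, false]] 3) v u) = true :=
      fun u v => splitGraph_adj' _ u v
    have hneKR : ∀ (a b : Fin 8), (Sum.inl a : Fin (2 ^ 3) ⊕ Fin (2 ^ 3)) ≠ Sum.inr b :=
      fun a b h => Sum.inl_ne_inr h
    have hKK : ∀ i j : Fin 8, i ≠ j →
        (Gk ![![true, false], ![false, false]] ![![false, true], ![false, false]] 3).Adj
          (Sum.inl i) (Sum.inl j) := by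
      intro i j hij
      rw [adjChar]
      exact ⟨fun hc => hij (Sum.inl.inj hc), by simp [brel]⟩
    have hKR : ∀ (j i : Fin 8),
        (Gk ![![true, false], ![false, false]] ![![false, true], ![false, false]] 3).Adj
          (Sum.inl j) (Sum.inr i) ↔ bM3 i j = true := by
      intro j i
      have key : (brel (morphIter ![![true, false], ![false, false]]
            ![![false, true], ![false, false]] 3) (Sum.inl j) (Sum.inr i) ||
          brel (morphIter ![![true, false], ![false, false]]
            ![![false, true], ![false, false]] 3) (Sum.inr i) (Sum.inl j)) = bM3 i j := by
        show (morphIter ![![true, false], ![false, false]]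
          ![![false, true], ![false, false]] 3 i j || false) = bM3 i j
        rw [Bool.or_false, hM]
      rw [adjChar, key]
      exact ⟨fun h => h.2, fun h => ⟨hneKR j i, h⟩⟩
    have hAltRel : ∀ u v : Fin (2 ^ 3) ⊕ Fin (2 ^ 3), u ≠ v →
        ((Gk ![![true, false], ![false, false]] ![![false, true], ![false, false]] 3).Adj u v ↔
          (RelW w u v ∨ RelW w v u)) :=
      fun u v h => (hadj u v h).trans (altIff (fun a b => decide_eq_true_iff) w u v h)
    have eqF : ∀ u v : Fin (2 ^ 3) ⊕ Fin (2 ^ 3), u ≠ v →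
        (∀ p, cnt u (w.take p) = cnt v (w.take p)) → False :=
      fun u v hne he => eqContra w u v (hmem u) hne he
    have total : ∀ i j : Fin 8, i ≠ j →
        (i ≠ j ∧ RelW w (Sum.inl i) (Sum.inl j)) ∨
        (j ≠ i ∧ RelW w (Sum.inl j) (Sum.inl i)) := by
      intro i j hij
      have hne : (Sum.inl i : Fin (2 ^ 3) ⊕ Fin (2 ^ 3)) ≠ Sum.inl j :=
        fun hc => hij (Sum.inl.inj hc)
      rcases (hAltRel _ _ hne).mp (hKK i j hij) with h | h
      · exact Or.inl ⟨hij, h⟩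
      · exact Or.inr ⟨hij.symm, h⟩
    have asym : ∀ i j : Fin 8,
        (i ≠ j ∧ RelW w (Sum.inl i) (Sum.inl j)) →
        (j ≠ i ∧ RelW w (Sum.inl j) (Sum.inl i)) → False := by
      intro i j h1 h2
      exact eqF (Sum.inl i) (Sum.inl j) (fun hc => h1.1 (Sum.inl.inj hc))
        (fun p => by have a1 := h1.2 p; have a2 := h2.2 p; omega)
    have convOr : ∀ k : Fin 8,
        ConvP (fun i j => i ≠ j ∧ RelW w (Sum.inl i) (Sum.inl j)) (fun j => bM3 k j = true) ∨
        ConvP (fun i j => i ≠ j ∧ RelW w (Sum.inl i) (Sum.inl j))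
          (fun j => ¬ bM3 k j = true) := by
      intro k
      by_cases hex : ∃ u v z : Fin 8, (u ≠ v ∧ RelW w (Sum.inl u) (Sum.inl v)) ∧
          (v ≠ z ∧ RelW w (Sum.inl v) (Sum.inl z)) ∧
          bM3 k u = true ∧ bM3 k z = true ∧ ¬ bM3 k v = true
      · obtain ⟨u, v, z, huv, hvz, hSu, hSz, hSv⟩ := hex
        have hu := (hAltRel (Sum.inl u) (Sum.inr k) (hneKR u k)).mp ((hKR u k).mpr hSu)
        have hz := (hAltRel (Sum.inl z) (Sum.inr k) (hneKR z k)).mp ((hKR z k).mpr hSz)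
        have hvno : ¬ (RelW w (Sum.inl v) (Sum.inr k) ∨ RelW w (Sum.inr k) (Sum.inl v)) :=
          fun h => hSv ((hKR v k).mp ((hAltRel _ _ (hneKR v k)).mpr h))
        rcases hu with hui | huo <;> rcases hz with hzi | hzo
        · -- u ∈ I, z ∈ I : chord gives v adjacent to r, contradiction
          refine absurd (Or.inl (fun p => ?_)) hvno
          have a1 := huv.2 p; have a2 := hvz.2 p; have a3 := hzi p; have a4 := hui p
          omega
        · -- u ∈ I, z ∈ O : the main case
          right
          intro u' v' z' hu'v' hv'z' hnSu' hnSz'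
          intro hSv'
          have hv' := (hAltRel (Sum.inl v') (Sum.inr k) (hneKR v' k)).mp
            ((hKR v' k).mpr hSv')
          rcases hv' with hvI | hvO
          · by_cases hu'z : u' = z
            · subst hu'z
              exact eqF (Sum.inl v') (Sum.inr k) (hneKR v' k)
                (fun p => by
                  have a1 := hu'v'.2 p; have a2 := hvI p; have a3 := hzo p; omega)
            · rcases total u' z hu'z with h | h
              · have hrel : RelW w (Sum.inl u') (Sum.inr k) := fun p => by
                  have a1 := hu'v'.2 p; have a2 := hvI p; have a3 := hzo p
                  have a4 := h.2 p; omega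
                exact hnSu' ((hKR u' k).mp
                  ((hAltRel _ _ (hneKR u' k)).mpr (Or.inl hrel)))
              · exact eqF (Sum.inr k) (Sum.inl z) (Ne.symm (hneKR z k))
                  (fun p => by
                    have a1 := h.2 p; have a2 := hu'v'.2 p; have a3 := hvI p
                    have a4 := hzo p; omega)
          · by_cases huz' : u = z'
            · subst huz'
              exact eqF (Sum.inr k) (Sum.inl v') (Ne.symm (hneKR v' k))
                (fun p => by
                  have a1 := hui p; have a2 := hvO p; have a3 := hv'z'.2 p; omega)
            · rcases total u z' huz' with h | h
              · have hrel : RelW w (Sum.inr k) (Sum.inl z') := fun p => by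
                  have a1 := hui p; have a2 := hvO p; have a3 := hv'z'.2 p
                  have a4 := h.2 p; omega
                exact hnSz' ((hKR z' k).mp
                  ((hAltRel _ _ (hneKR z' k)).mpr (Or.inr hrel)))
              · exact eqF (Sum.inr k) (Sum.inl v') (Ne.symm (hneKR v' k))
                  (fun p => by
                    have a1 := h.2 p; have a2 := hui p; have a3 := hvO p
                    have a4 := hv'z'.2 p; omega)
        · -- u ∈ O, z ∈ I : 4-cycle
          exact (eqF (Sum.inr k) (Sum.inl u) (Ne.symm (hneKR u k))
            (fun p => by
              have a1 := huo p; have a2 := huv.2 p; have a3 := hvz.2 p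
              have a4 := hzi p; omega)).elim
        · -- u ∈ O, z ∈ O : chord gives v adjacent to r, contradiction
          refine absurd (Or.inr (fun p => ?_)) hvno
          have a1 := huo p; have a2 := huv.2 p; have a3 := hvz.2 p; have a4 := hzo p
          omega
      · left
        intro u v z huv hvz hSu hSz
        by_contra hSv
        exact hex ⟨u, v, z, huv, hvz, hSu, hSz, hSv⟩
    exact final8 (fun i j => i ≠ j ∧ RelW w (Sum.inl i) (Sum.inl j))
      total asym (convOr 0) (convOr 2) (convOr 4)
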